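/- If the left multiplication group Mlt_ℓ(L) of a loop L is a simple group, then L is a simple loop, i.e., every normal subloop of L is either trivial ({1}) or all of L. -/

import Mathlib

/-- A loop: a binary operation with two-sided identity whose left and right
translations are bijections. -/
structure LoopStr (L : Type*) where
  mul : L → L → L
  one : L
  one_mul : ∀ x, mul one x = x
  mul_one : ∀ x, mul x one = x
  mul_left_bij : ∀ x, Function.Bijective (mul x)
  mul_right_bij : ∀ x, Function.Bijective fun y => mul y x

/-- Left translation `λ_x` as a permutation. -/
noncomputable def LoopStr.lam {L : Type*} (S : LoopStr L) (x : L) : Equiv.Perm L :=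
  Equiv.ofBijective _ (S.mul_left_bij x)

/-- Right translation `ρ_x` as a permutation. -/
noncomputable def LoopStr.rho {L : Type*} (S : LoopStr L) (x : L) : Equiv.Perm L :=
  Equiv.ofBijective _ (S.mul_right_bij x)

/-- The left multiplication group `Mlt_ℓ(L)`. -/
noncomputable def LoopStr.Mlt {L : Type*} (S : LoopStr L) : Subgroup (Equiv.Perm L) :=
  Subgroup.closure (Set.range S.lam)

/-- Left division: `ldiv a b` is the unique solution `x` of `a·x = b`. -/
noncomputable def LoopStr.ldiv {L : Type*} (S : LoopStr L) (a b : L) : L := (S.lam a).symm b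

/-- Right division: `rdiv a b` is the unique solution `x` of `x·b = a`. -/
noncomputable def LoopStr.rdiv {L : Type*} (S : LoopStr L) (a b : L) : L := (S.rho b).symm a

/-- The inner mapping `δ_{x,y} = λ_{xy}⁻¹ ∘ λ_x ∘ λ_y`. -/
noncomputable def LoopStr.delta {L : Type*} (S : LoopStr L) (x y : L) : Equiv.Perm L :=
  (S.lam (S.mul x y))⁻¹ * S.lam x * S.lam y

/-- A loop homomorphism: preserves the multiplication and the identity. -/
def IsLoopHom {L L' : Type*} (S : LoopStr L) (S' : LoopStr L') (θ : L → L') : Prop :=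
  θ S.one = S'.one ∧ ∀ x y, θ (S.mul x y) = S'.mul (θ x) (θ y)

/-- A subloop: a subset containing the identity, closed under multiplication
and both divisions. -/
def IsSubloop {L : Type*} (S : LoopStr L) (N : Set L) : Prop :=
  S.one ∈ N ∧ (∀ a ∈ N, ∀ b ∈ N, S.mul a b ∈ N) ∧
    (∀ a ∈ N, ∀ b ∈ N, S.ldiv a b ∈ N) ∧ (∀ a ∈ N, ∀ b ∈ N, S.rdiv a b ∈ N)

/-- A normal subloop: `ab·N = a·(bN) = (aN)·b` for all `a, b`. -/
def IsNormalSubloop {L : Type*} (S : LoopStr L) (N : Set L) : Prop :=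
  IsSubloop S N ∧ ∀ a b : L,
    ((fun n => S.mul (S.mul a b) n) '' N = (fun n => S.mul a (S.mul b n)) '' N) ∧
    ((fun n => S.mul (S.mul a b) n) '' N = (fun n => S.mul (S.mul a n) b) '' N)

section Aux

variable {L : Type*} (S : LoopStr L)

lemma lam_apply (x y : L) : S.lam x y = S.mul x y := rfl

lemma mul_ldiv (a b : L) : S.mul a (S.ldiv a b) = b :=
  (S.lam a).apply_symm_apply b

lemma loop_mul_left_inj {a : L} {x y : L} (h : S.mul a x = S.mul a y) : x = y :=
  (S.mul_left_bij a).injective h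

end Aux

theorem stmt5 {L : Type*} (S : LoopStr L) (h : IsSimpleGroup ↥S.Mlt) :
    ∀ N : Set L, IsNormalSubloop S N → N = {S.one} ∨ N = Set.univ := by
  intro N hN
  obtain ⟨⟨hone, hmul, hldiv, _⟩, hnorm⟩ := hN
  -- coset relation
  set r : L → L → Prop := fun x y => ∃ n ∈ N, y = S.mul x n with hr
  have hrefl : ∀ x, r x x := fun x => ⟨S.one, hone, (S.mul_one x).symm⟩
  -- nN = N for n ∈ N
  have hnN : ∀ n ∈ N, (fun m => S.mul n m) '' N = N := by
    intro n hn
    apply Set.Subset.antisymm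
    · rintro _ ⟨m, hm, rfl⟩; exact hmul n hn m hm
    · intro m hm
      exact ⟨S.ldiv n m, hldiv n hn m hm, mul_ldiv S n m⟩
  -- coset equality from r
  have hco : ∀ x y, r x y →
      (fun m => S.mul x m) '' N = (fun m => S.mul y m) '' N := by
    rintro x y ⟨n, hn, rfl⟩
    have h1 := (hnorm x n).1
    have h2 : (fun m => S.mul x (S.mul n m)) '' N
        = (fun m => S.mul x m) '' ((fun m => S.mul n m) '' N) := by
      rw [Set.image_image]
    rw [h1, h2, hnN n hn]
  have hmem_iff : ∀ x y, r x y ↔ y ∈ (fun m => S.mul x m) '' N := by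
    intro x y
    constructor
    · rintro ⟨n, hn, rfl⟩; exact ⟨n, hn, rfl⟩
    · rintro ⟨n, hn, rfl⟩; exact ⟨n, hn, rfl⟩
  have hsymm : ∀ x y, r x y → r y x := by
    intro x y hxy
    rw [hmem_iff]
    rw [← hco x y hxy]
    rw [← hmem_iff]
    exact hrefl x
  have htrans : ∀ x y z, r x y → r y z → r x z := by
    intro x y z hxy hyz
    rw [hmem_iff, hco x y hxy, ← hmem_iff]
    exact hyz
  -- translations preserve r (iff form)
  have hlam_iff : ∀ a x y, r x y ↔ r (S.mul a x) (S.mul a y) := by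
    intro a x y
    constructor
    · rintro ⟨n, hn, rfl⟩
      have h1 := (hnorm a x).1
      have : S.mul a (S.mul x n) ∈ (fun m => S.mul a (S.mul x m)) '' N :=
        ⟨n, hn, rfl⟩
      rw [← h1] at this
      rw [hmem_iff]; exact this
    · intro hxy
      rw [hmem_iff] at hxy
      rw [(hnorm a x).1] at hxy
      obtain ⟨n, hn, he⟩ := hxy
      exact ⟨n, hn, loop_mul_left_inj S he.symm⟩
  -- all elements of Mlt preserve r
  have hpres : ∀ g ∈ S.Mlt, ∀ x y, r x y ↔ r (g x) (g y) := by
    intro g hg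
    induction hg using Subgroup.closure_induction with
    | mem g hg =>
        obtain ⟨a, rfl⟩ := hg
        intro x y
        exact hlam_iff a x y
    | one => intro x y; rfl
    | mul g₁ g₂ _ _ ih1 ih2 =>
        intro x y
        rw [ih2 x y, ih1 (g₂ x) (g₂ y)]
        rfl
    | inv g _ ih =>
        intro x y
        have := ih (g⁻¹ x) (g⁻¹ y)
        simp only [Equiv.Perm.inv_def, Equiv.apply_symm_apply] at this
        exact this.symm
  -- the kernel subgroup K of Mlt
  let K : Subgroup ↥S.Mlt :=
    { carrier := {g | ∀ x, r x ((g : Equiv.Perm L) x)}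
      one_mem' := fun x => hrefl x
      mul_mem' := by
        intro g₁ g₂ h1 h2 x
        exact htrans _ _ _ (h2 x) (h1 ((g₂ : Equiv.Perm L) x))
      inv_mem' := by
        intro g hg x
        apply hsymm
        have := hg ((g : Equiv.Perm L)⁻¹ x)
        simpa using this }
  have hKnormal : K.Normal := by
    constructor
    intro g hg k x
    have h1 : r ((k : Equiv.Perm L)⁻¹ x) ((g : Equiv.Perm L) ((k : Equiv.Perm L)⁻¹ x)) :=
      hg ((k : Equiv.Perm L)⁻¹ x)
    have h2 := (hpres (k : Equiv.Perm L) k.2 _ _).mp h1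
    simpa using h2
  have := h.eq_bot_or_eq_top_of_normal K hKnormal
  -- lam n ∈ Mlt and lam n ∈ K for n ∈ N
  have hlam_mem : ∀ a : L, S.lam a ∈ S.Mlt := fun a =>
    Subgroup.subset_closure ⟨a, rfl⟩
  have hNx_xN : ∀ x, (fun m => S.mul x m) '' N = (fun m => S.mul m x) '' N := by
    intro x
    have h2 := (hnorm S.one x).2
    simp only [S.one_mul] at h2
    exact h2
  rcases this with hbot | htop
  · left
    apply Set.Subset.antisymm
    · intro n hn
      have hK : (⟨S.lam n, hlam_mem n⟩ : ↥S.Mlt) ∈ K := by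
        intro x
        rw [hmem_iff, hNx_xN]
        exact ⟨n, hn, rfl⟩
      rw [hbot] at hK
      have : S.lam n = 1 := congrArg Subtype.val hK
      have := congrFun (congrArg (fun (e : Equiv.Perm L) => (e : L → L)) this) S.one
      simp only [Equiv.Perm.coe_one, id] at this
      rw [lam_apply, S.mul_one] at this
      simp [this]
    · rintro x rfl; exact hone
  · right
    ext a
    simp only [Set.mem_univ, iff_true]
    have hK : (⟨S.lam a, hlam_mem a⟩ : ↥S.Mlt) ∈ K := by rw [htop]; trivial
    have := hK S.one
    obtain ⟨n, hn, he⟩ := this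
    rw [lam_apply, S.mul_one, S.one_mul] at he
    rwa [he]
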